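/- On ℝ³ let ⟨x,y⟩₁,₂ := −x₁y₁ + x₂y₂ + x₃y₃, and let ×' be the Minkowski cross product, i.e. the antisymmetric bilinear map with e₁ ×' e₂ = e₃, e₂ ×' e₃ = −e₁, e₃ ×' e₁ = e₂. Let A be a 3×3 real matrix with ⟨Ax,Ay⟩₁,₂ = ⟨x,y⟩₁,₂ for all x,y and det A = 1, and suppose A ≠ I. If u ∈ ℝ³ satisfies A·u = u and ⟨u,u⟩₁,₂ = 1 (u is a spacelike unit vector fixed by A), then the restriction of A − I to the orthocomplement u^⊥ = {w : ⟨w,u⟩₁,₂ = 0} is a bijection of u^⊥ onto itself; consequently, for every b ∈ ℝ³ there exists v ∈ ℝ³ with ⟨v,u⟩₁,₂ = 0 and A·v + b ×' u = v. -/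
import Mathlib

/-- The Minkowski inner product `⟨x,y⟩₁,₂ = −x₁y₁ + x₂y₂ + x₃y₃` on `ℝ³`. -/
def mdot (x y : Fin 3 → ℝ) : ℝ := -(x 0 * y 0) + x 1 * y 1 + x 2 * y 2

/-- The Minkowski cross product on `ℝ³`: `x ×' y = η (x × y)` with `η = diag(−1,1,1)`,
so that `e₁ ×' e₂ = e₃`, `e₂ ×' e₃ = −e₁`, `e₃ ×' e₁ = e₂`. -/
def mcross (x y : Fin 3 → ℝ) : Fin 3 → ℝ :=
  ![-(x 1 * y 2 - x 2 * y 1), x 2 * y 0 - x 0 * y 2, x 0 * y 1 - x 1 * y 0]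

lemma cross_det (x y v : Fin 3 → ℝ) :
    mdot (mcross x y) v = Matrix.det (Matrix.of ![x, y, v]) := by
  simp [mdot, mcross, Matrix.det_fin_three]; ring

lemma lagrange (x y : Fin 3 → ℝ) :
    mdot (mcross x y) (mcross x y) = mdot x y ^ 2 - mdot x x * mdot y y := by
  simp [mdot, mcross]; ring

lemma det_rows_mulVec (A : Matrix (Fin 3) (Fin 3) ℝ) (x y v : Fin 3 → ℝ) :
    Matrix.det (Matrix.of ![A.mulVec x, A.mulVec y, A.mulVec v])
      = A.det * Matrix.det (Matrix.of ![x, y, v]) := by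
  have h : (Matrix.of ![A.mulVec x, A.mulVec y, A.mulVec v]) = (Matrix.of ![x, y, v]) * A.transpose := by
    ext i j
    fin_cases i <;>
      simp [Matrix.mul_apply, Matrix.mulVec, dotProduct, Fin.sum_univ_three, mul_comm]
  rw [h, Matrix.det_mul, Matrix.det_transpose]; ring

lemma mdot_nondeg (v : Fin 3 → ℝ) (h : ∀ x, mdot v x = 0) : v = 0 := by
  funext i
  fin_cases i
  · have := h ![1,0,0]; simp [mdot] at this; simpa using this
  · have := h ![0,1,0]; simp [mdot] at this; simpa using this
  · have := h ![0,0,1]; simp [mdot] at this; simpa using this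

lemma mdot_sub_left (a b x : Fin 3 → ℝ) : mdot (a - b) x = mdot a x - mdot b x := by
  simp [mdot]; ring

lemma fixed_basis (A : Matrix (Fin 3) (Fin 3) ℝ) (r0 r1 r2 : Fin 3 → ℝ)
    (h0 : A.mulVec r0 = r0) (h1 : A.mulVec r1 = r1) (h2 : A.mulVec r2 = r2)
    (hd : (Matrix.of ![r0, r1, r2]).det ≠ 0) : A = 1 := by
  set N := (Matrix.of ![r0, r1, r2]).transpose with hN
  have hmul : A * N = N := by
    ext i j
    fin_cases j
    · simpa [N, Matrix.mul_apply, Matrix.mulVec, dotProduct, Fin.sum_univ_three]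
        using congrFun h0 i
    · simpa [N, Matrix.mul_apply, Matrix.mulVec, dotProduct, Fin.sum_univ_three]
        using congrFun h1 i
    · simpa [N, Matrix.mul_apply, Matrix.mulVec, dotProduct, Fin.sum_univ_three]
        using congrFun h2 i
  have hdN : IsUnit N.det := by
    rw [hN, Matrix.det_transpose]
    exact isUnit_iff_ne_zero.mpr hd
  have h := congrArg (· * N⁻¹) hmul
  simpa [Matrix.mul_assoc, Matrix.mul_nonsing_inv _ hdN] using h

set_option maxHeartbeats 2000000 in
lemma fix_forces_id (A : Matrix (Fin 3) (Fin 3) ℝ)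
    (hA : ∀ x y : Fin 3 → ℝ, mdot (A.mulVec x) (A.mulVec y) = mdot x y)
    (hdet : A.det = 1)
    (u : Fin 3 → ℝ) (hu : A.mulVec u = u) (huu : mdot u u = 1)
    (w : Fin 3 → ℝ) (hw : A.mulVec w = w) (hwu : mdot w u = 0) (hwne : w ≠ 0) :
    A = 1 := by
  have hAu : IsUnit A.det := by rw [hdet]; exact isUnit_one
  have huu' : -(u 0 * u 0) + u 1 * u 1 + u 2 * u 2 = 1 := huu
  have hwu' : -(w 0 * u 0) + w 1 * u 1 + w 2 * u 2 = 0 := hwu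
  have huw : mdot u w = 0 := by
    have : mdot u w = mdot w u := by simp [mdot]; ring
    rw [this, hwu]
  by_cases hs : mdot w w = 0
  · -- null case
    have hs' : -(w 0 * w 0) + w 1 * w 1 + w 2 * w 2 = 0 := hs
    have hw0 : w 0 ≠ 0 := by
      intro h0
      apply hwne
      have h1 : w 1 = 0 := by nlinarith [sq_nonneg (w 1), sq_nonneg (w 2)]
      have h2 : w 2 = 0 := by nlinarith [sq_nonneg (w 1), sq_nonneg (w 2)]
      funext i; fin_cases i <;> simpa [h0, h1, h2]
    set p : Fin 3 → ℝ := ![-(w 0), w 1, w 2] with hp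
    have hp0 : p 0 = -(w 0) := rfl
    have hp1 : p 1 = w 1 := rfl
    have hp2 : p 2 = w 2 := rfl
    have key : (u 2 * w 1 - u 1 * w 2) ^ 2 = w 0 ^ 2 := by
      linear_combination (w 1 ^ 2 + w 2 ^ 2) * huu' - (u 1 * w 1 + u 2 * w 2 + u 0 * w 0) * hwu'
        + (u 0 ^ 2 + 1) * hs'
    set N : Matrix (Fin 3) (Fin 3) ℝ := Matrix.of ![u, w, p] with hN
    have hd : N.det = 2 * w 0 * (u 2 * w 1 - u 1 * w 2) := by
      simp [hN, hp, Matrix.det_fin_three, Matrix.vecHead, Matrix.vecTail]; ring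
    have hdN : N.det ≠ 0 := by
      rw [hd]
      intro h
      have h4 : w 0 ^ 4 = 0 := by
        linear_combination (-(w 0 ^ 2)) * key + (w 0 * (u 2 * w 1 - u 1 * w 2) / 2) * h
      exact hw0 (pow_eq_zero_iff (n := 4) (by norm_num) |>.mp h4)
    have hUnit : IsUnit N.transpose.det := by
      rw [Matrix.det_transpose]; exact isUnit_iff_ne_zero.mpr hdN
    obtain ⟨y, hAp⟩ : ∃ y : Fin 3 → ℝ, A.mulVec p = (N.transpose).mulVec y :=
      ⟨(N.transpose)⁻¹.mulVec (A.mulVec p), by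
        rw [Matrix.mulVec_mulVec, Matrix.mul_nonsing_inv _ hUnit, Matrix.one_mulVec]⟩
    have hAp' : ∀ i, A.mulVec p i = y 0 * u i + y 1 * w i + y 2 * p i := by
      intro i
      rw [hAp]
      simp [hN, Matrix.mulVec, dotProduct, Fin.sum_univ_three,
        Matrix.transpose_apply, Matrix.vecHead, Matrix.vecTail]
      ring
    have e1' : -(A.mulVec p 0 * u 0) + A.mulVec p 1 * u 1 + A.mulVec p 2 * u 2
        = -(p 0 * u 0) + p 1 * u 1 + p 2 * u 2 := by
      have h := hA p u; rwa [hu] at h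
    have e2' : -(A.mulVec p 0 * w 0) + A.mulVec p 1 * w 1 + A.mulVec p 2 * w 2
        = -(p 0 * w 0) + p 1 * w 1 + p 2 * w 2 := by
      have h := hA p w; rwa [hw] at h
    have e3' : -(A.mulVec p 0 * A.mulVec p 0) + A.mulVec p 1 * A.mulVec p 1
          + A.mulVec p 2 * A.mulVec p 2
        = -(p 0 * p 0) + p 1 * p 1 + p 2 * p 2 := hA p p
    rw [hAp' 0, hAp' 1, hAp' 2, hp0, hp1, hp2] at e1' e2' e3'
    have hc : w 0 ^ 2 + w 1 ^ 2 + w 2 ^ 2 ≠ 0 := by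
      intro h; exact hw0 (by nlinarith [sq_nonneg (w 1), sq_nonneg (w 2), sq_nonneg (w 0)])
    have hy2 : y 2 = 1 := by
      have h : (y 2 - 1) * (w 0 ^ 2 + w 1 ^ 2 + w 2 ^ 2) = 0 := by
        linear_combination e2' - y 0 * hwu' - y 1 * hs'
      rcases mul_eq_zero.mp h with h' | h'
      · linarith
      · exact absurd h' hc
    have hy0 : y 0 = 0 := by
      linear_combination e1' - y 0 * huu' - y 1 * hwu'
        - (u 0 * w 0 + u 1 * w 1 + u 2 * w 2) * hy2
    have hy1 : y 1 = 0 := by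
      rw [hy0, hy2] at e3'
      have h : y 1 * (2 * (w 0 ^ 2 + w 1 ^ 2 + w 2 ^ 2)) = 0 := by
        linear_combination e3' - y 1 ^ 2 * hs'
      rcases mul_eq_zero.mp h with h' | h'
      · exact h'
      · exfalso; apply hc; linarith
    have hApp : A.mulVec p = p := by
      funext i
      rw [hAp' i, hy0, hy1, hy2]; ring
    exact fixed_basis A u w p hu hw hApp hdN
  · -- non-null case
    have hz : A.mulVec (mcross u w) = mcross u w := by
      have keyz : ∀ x, mdot (A.mulVec (mcross u w) - mcross u w) x = 0 := by
        intro x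
        obtain ⟨y, rfl⟩ : ∃ y, A.mulVec y = x := by
          refine ⟨A⁻¹.mulVec x, ?_⟩
          rw [Matrix.mulVec_mulVec, Matrix.mul_nonsing_inv _ hAu, Matrix.one_mulVec]
        rw [mdot_sub_left]
        have h1 : mdot (A.mulVec (mcross u w)) (A.mulVec y) = mdot (mcross u w) y := hA _ y
        have h2 : mdot (mcross u w) (A.mulVec y) = mdot (mcross u w) y := by
          rw [cross_det, cross_det]
          conv_lhs => rw [← hu, ← hw]
          rw [det_rows_mulVec, hdet, one_mul]
        rw [h1, h2, sub_self]
      have := mdot_nondeg _ keyz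
      exact sub_eq_zero.mp this
    apply fixed_basis A u w (mcross u w) hu hw hz
    rw [← cross_det, lagrange, huw, huu]
    simpa using hs

/-- If `A ∈ SO(1,2)`, `A ≠ I`, fixes a spacelike unit vector `u`
(`Au = u`, `⟨u,u⟩₁,₂ = 1`), then `A − I` restricts to a bijection of the
orthocomplement `u^⊥ = {w : ⟨w,u⟩₁,₂ = 0}` onto itself; consequently, for every
`b ∈ ℝ³` there exists `v` with `⟨v,u⟩₁,₂ = 0` and `Av + b ×' u = v`. -/
theorem stmt10 (A : Matrix (Fin 3) (Fin 3) ℝ)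
    (hA : ∀ x y : Fin 3 → ℝ, mdot (A.mulVec x) (A.mulVec y) = mdot x y)
    (hdet : A.det = 1) (hAne : A ≠ 1)
    (u : Fin 3 → ℝ) (hu : A.mulVec u = u) (huu : mdot u u = 1) :
    Set.BijOn (fun w => A.mulVec w - w) {w | mdot w u = 0} {w | mdot w u = 0} ∧
    ∀ b : Fin 3 → ℝ, ∃ v : Fin 3 → ℝ, mdot v u = 0 ∧ A.mulVec v + mcross b u = v := by
  have key : ∀ w : Fin 3 → ℝ, mdot w u = 0 → A.mulVec w = w → w = 0 := by
    intro w hwu hw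
    by_contra hne
    exact hAne (fix_forces_id A hA hdet u hu huu w hw hwu hne)
  have hfix : ∀ v : Fin 3 → ℝ, mdot (A.mulVec v) u = mdot v u := by
    intro v
    have h := hA v u; rwa [hu] at h
  -- the auxiliary linear operator g v = Av - v + ⟨v,u⟩ u
  set φ : (Fin 3 → ℝ) →ₗ[ℝ] ℝ :=
    { toFun := fun v => mdot v u
      map_add' := by intro a b; simp [mdot]; ring
      map_smul' := by intro c a; simp [mdot]; ring } with hφ
  set g : (Fin 3 → ℝ) →ₗ[ℝ] (Fin 3 → ℝ) :=
    A.mulVecLin - LinearMap.id + φ.smulRight u with hg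
  have hgapp : ∀ v, g v = A.mulVec v - v + mdot v u • u := fun v => rfl
  have hgdot : ∀ v, mdot (g v) u = mdot v u := by
    intro v
    rw [hgapp]
    have expand : mdot (A.mulVec v - v + mdot v u • u) u
        = (mdot (A.mulVec v) u - mdot v u) + mdot v u * mdot u u := by
      simp [mdot]; ring
    rw [expand, hfix, huu]; ring
  have hginj : Function.Injective g := by
    rw [injective_iff_map_eq_zero g]  -- maybe wrong name
    intro v hv
    have h0 : mdot v u = 0 := by
      have h := hgdot v
      rw [hv, show mdot (0 : Fin 3 → ℝ) u = 0 from by simp [mdot]] at h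
      exact h.symm
    have h1 : A.mulVec v - v = 0 := by
      have := hgapp v; rw [hv] at this; rw [h0] at this; simpa using this.symm
    exact key v h0 (sub_eq_zero.mp h1)
  have hgsurj : Function.Surjective g := (LinearMap.injective_iff_surjective).mp hginj
  have hSurjOn : Set.SurjOn (fun w => A.mulVec w - w) {w | mdot w u = 0} {w | mdot w u = 0} := by
    intro z hz
    obtain ⟨v, hv⟩ := hgsurj z
    have hvu : mdot v u = 0 := by
      have := hgdot v; rw [hv] at this
      rw [← this]; exact hz
    refine ⟨v, hvu, ?_⟩
    show A.mulVec v - v = z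
    have := hgapp v
    rw [hv, hvu] at this
    simpa using this.symm
  have hMaps : Set.MapsTo (fun w => A.mulVec w - w) {w | mdot w u = 0} {w | mdot w u = 0} := by
    intro w hw
    show mdot (A.mulVec w - w) u = 0
    rw [mdot_sub_left, hfix, hw, sub_self]
  have hInj : Set.InjOn (fun w => A.mulVec w - w) {w | mdot w u = 0} := by
    intro w1 h1 w2 h2 heq
    have hde : A.mulVec (w1 - w2) = w1 - w2 := by
      rw [Matrix.mulVec_sub]
      have : A.mulVec w1 - w1 = A.mulVec w2 - w2 := heq
      funext i
      have := congrFun this i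
      simp at this ⊢
      linarith
    have hdu : mdot (w1 - w2) u = 0 := by
      rw [mdot_sub_left, h1, h2, sub_self]
    have := key _ hdu hde
    exact sub_eq_zero.mp this
  refine ⟨⟨hMaps, hInj, hSurjOn⟩, ?_⟩
  intro b
  have hbu : mdot (-(mcross b u)) u = 0 := by simp [mdot, mcross]; ring
  obtain ⟨v, hvmem, hveq⟩ := hSurjOn hbu
  refine ⟨v, hvmem, ?_⟩
  have hveq' : A.mulVec v - v = -(mcross b u) := hveq
  have : A.mulVec v + mcross b u - v = 0 := by
    rw [show A.mulVec v + mcross b u - v = (A.mulVec v - v) + mcross b u from by abel,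
      hveq', neg_add_cancel]
  have := sub_eq_zero.mp this
  exact this
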